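/- Let G be a Polish group and X a Polish G-space. Some G-orbit is comeager in X if and only if there is a dense set D ⊆ X such that D is contained in a single G-orbit and, for every open neighborhood V of the identity of G and every x ∈ D, the set V·x = {g·x : g ∈ V} is dense in some open neighborhood of x. -/

import Mathlib

open Set Metric Filter Topology

section Aux

variable {G X : Type*}

/-- A maximal disjoint family of "pieces" with dense union. -/
private lemma exists_maximal_disjoint_family [TopologicalSpace X]
    (C : Set (Set X × Set G))
    (h : ∀ U₀ : Set X, IsOpen U₀ → U₀.Nonempty →
      ∃ p ∈ C, p.1 ⊆ U₀ ∧ p.1.Nonempty) :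
    ∃ F ⊆ C, (F.Pairwise fun p q => Disjoint p.1 q.1) ∧ Dense (⋃ p ∈ F, p.1) := by
  classical
  have hub : ∀ c ⊆ {F | F ⊆ C ∧ F.Pairwise fun p q => Disjoint p.1 q.1},
      IsChain (· ⊆ ·) c → ∃ ub ∈ {F | F ⊆ C ∧ F.Pairwise fun p q => Disjoint p.1 q.1},
        ∀ s ∈ c, s ⊆ ub := by
    intro c hc hchain
    have hmem : ⋃₀ c ∈ {F | F ⊆ C ∧ F.Pairwise fun p q => Disjoint p.1 q.1} := by
      constructor
      · exact Set.sUnion_subset fun s hs => (hc hs).1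
      · intro p hp q hq hpq
        rcases hp with ⟨s, hs, hps⟩
        rcases hq with ⟨t, ht, hqt⟩
        rcases hchain.total hs ht with hst | hts
        · exact (hc ht).2 (hst hps) hqt hpq
        · exact (hc hs).2 hps (hts hqt) hpq
    exact ⟨⋃₀ c, hmem, fun s hs => Set.subset_sUnion_of_mem hs⟩
  obtain ⟨F, hFmax⟩ := zorn_subset {F | F ⊆ C ∧ F.Pairwise fun p q => Disjoint p.1 q.1} hub
  · refine ⟨F, hFmax.prop.1, hFmax.prop.2, ?_⟩
    by_contra hdense
    rw [dense_iff_inter_open] at hdense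
    push_neg at hdense
    obtain ⟨U₀, hU₀o, hU₀ne, hU₀d⟩ := hdense
    have hU₀o' : IsOpen (U₀ \ closure (⋃ p ∈ F, p.1)) := hU₀o.sdiff isClosed_closure
    have hU₀ne' : (U₀ \ closure (⋃ p ∈ F, p.1)).Nonempty := by
      rcases hU₀ne with ⟨z, hz⟩
      refine ⟨z, hz, fun hzc => ?_⟩
      exact Set.not_nonempty_empty (hU₀d ▸ _root_.mem_closure_iff.1 hzc U₀ hU₀o hz)
    obtain ⟨p, hpC, hpsub, hpne⟩ := h _ hU₀o' hU₀ne'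
    have hpdisj : ∀ q ∈ F, Disjoint p.1 q.1 := by
      intro q hq
      refine Set.disjoint_left.2 fun z hzp hzq => ?_
      exact (hpsub hzp).2 (subset_closure (Set.mem_biUnion hq hzq))
    have hpnotF : p ∉ F := by
      intro hpF
      rcases hpne with ⟨z, hz⟩
      exact (hpsub hz).2 (subset_closure (Set.mem_biUnion hpF hz))
    have hins : insert p F ∈ {F | F ⊆ C ∧ F.Pairwise fun p q => Disjoint p.1 q.1} := by
      constructor
      · exact Set.insert_subset hpC hFmax.prop.1
      · refine hFmax.prop.2.insert fun q hq _ => ⟨hpdisj q hq, (hpdisj q hq).symm⟩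
    have := hFmax.2 hins (Set.subset_insert p F)
    exact hpnotF (this (Set.mem_insert p F))

variable [MetricSpace G] [MetricSpace X]

private lemma extend_step (f : G → X)
    (hloc : ∀ W : Set G, IsOpen W → ∀ g ∈ W, f g ∈ interior (closure (f '' W)))
    {V : Set G} {U₀ : Set X} (hVo : IsOpen V) (hU₀o : IsOpen U₀) (hU₀ne : U₀.Nonempty)
    (hU₀V : U₀ ⊆ closure (f '' V)) {ε : ℝ} (hε : 0 < ε) :
    ∃ U' : Set X, ∃ V' : Set G, IsOpen U' ∧ IsOpen V' ∧ U'.Nonempty ∧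
      closure U' ⊆ U₀ ∧ closure V' ⊆ V ∧ (∃ c, U' ⊆ ball c ε) ∧ (∃ c, V' ⊆ ball c ε) ∧
      U' ⊆ closure (f '' V') := by
  obtain ⟨z, hz⟩ := hU₀ne
  obtain ⟨w, hwU₀, hwV⟩ := _root_.mem_closure_iff.1 (hU₀V hz) U₀ hU₀o hz
  obtain ⟨g, hgV, rfl⟩ := hwV
  obtain ⟨δ, hδpos, hδ⟩ := Metric.nhds_basis_closedBall.mem_iff.1 (hVo.mem_nhds hgV)
  set δ' : ℝ := min δ (ε / 2) with hδ'def
  have hδ'pos : 0 < δ' := lt_min hδpos (by linarith)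
  set V' : Set G := ball g δ' with hV'def
  have hV'cl : closure V' ⊆ V := by
    refine (closure_ball_subset_closedBall.trans ?_)
    exact (closedBall_subset_closedBall (min_le_left _ _)).trans hδ
  have hV'small : V' ⊆ ball g ε :=
    ball_subset_ball ((min_le_right _ _).trans (by linarith))
  have hfg : f g ∈ interior (closure (f '' V')) :=
    hloc V' isOpen_ball g (mem_ball_self hδ'pos)
  have hNopen : IsOpen (interior (closure (f '' V')) ∩ U₀) := isOpen_interior.inter hU₀o
  have hfgN : f g ∈ interior (closure (f '' V')) ∩ U₀ := ⟨hfg, hwU₀⟩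
  obtain ⟨ρ, hρpos, hρ⟩ := Metric.nhds_basis_closedBall.mem_iff.1 (hNopen.mem_nhds hfgN)
  set ρ' : ℝ := min ρ (ε / 2) with hρ'def
  have hρ'pos : 0 < ρ' := lt_min hρpos (by linarith)
  refine ⟨ball (f g) ρ', V', isOpen_ball, isOpen_ball, ⟨f g, mem_ball_self hρ'pos⟩,
    ?_, hV'cl, ⟨f g, ball_subset_ball ((min_le_right _ _).trans (by linarith))⟩,
    ⟨g, hV'small⟩, ?_⟩
  · refine (closure_ball_subset_closedBall.trans ?_)
    exact ((closedBall_subset_closedBall (min_le_left _ _)).trans hρ).trans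
      Set.inter_subset_right
  · intro z hz'
    have : z ∈ closedBall (f g) ρ := (closedBall_subset_closedBall (min_le_left _ _))
      (ball_subset_closedBall hz')
    exact interior_subset (hρ this).1

private lemma family_step (f : G → X)
    (hloc : ∀ W : Set G, IsOpen W → ∀ g ∈ W, f g ∈ interior (closure (f '' W)))
    {ε : ℝ} (hε : 0 < ε) (F : Set (Set X × Set G))
    (hF : ∀ p ∈ F, IsOpen p.1 ∧ IsOpen p.2 ∧ p.1 ⊆ closure (f '' p.2))
    (hFd : Dense (⋃ p ∈ F, p.1)) :
    ∃ F' : Set (Set X × Set G),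
      (∀ p ∈ F', IsOpen p.1 ∧ IsOpen p.2 ∧ p.1 ⊆ closure (f '' p.2) ∧
        (∃ c, p.1 ⊆ ball c ε) ∧ (∃ c, p.2 ⊆ ball c ε)) ∧
      (F'.Pairwise fun p q => Disjoint p.1 q.1) ∧ Dense (⋃ p ∈ F', p.1) ∧
      ∀ p ∈ F', ∃ q ∈ F, closure p.1 ⊆ q.1 ∧ closure p.2 ⊆ q.2 := by
  classical
  set C : Set (Set X × Set G) :=
    {p | (IsOpen p.1 ∧ IsOpen p.2 ∧ p.1 ⊆ closure (f '' p.2) ∧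
      (∃ c, p.1 ⊆ ball c ε) ∧ (∃ c, p.2 ⊆ ball c ε)) ∧
      ∃ q ∈ F, closure p.1 ⊆ q.1 ∧ closure p.2 ⊆ q.2} with hCdef
  have havail : ∀ U₀ : Set X, IsOpen U₀ → U₀.Nonempty →
      ∃ p ∈ C, p.1 ⊆ U₀ ∧ p.1.Nonempty := by
    intro U₀ hU₀o hU₀ne
    obtain ⟨z, hzU₀, hzU⟩ := dense_iff_inter_open.1 hFd U₀ hU₀o hU₀ne
    obtain ⟨q, hqF, hzq⟩ := Set.mem_iUnion₂.1 hzU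
    obtain ⟨hq1, hq2, hq3⟩ := hF q hqF
    obtain ⟨U', V', hU'o, hV'o, hU'ne, hU'cl, hV'cl, hU's, hV's, hU'V'⟩ :=
      extend_step f hloc hq2 (hU₀o.inter hq1) ⟨z, hzU₀, hzq⟩
        ((Set.inter_subset_right).trans hq3) hε
    refine ⟨(U', V'), ⟨⟨hU'o, hV'o, hU'V', hU's, hV's⟩,
      ⟨q, hqF, hU'cl.trans Set.inter_subset_right, hV'cl⟩⟩,
      (subset_closure.trans hU'cl).trans Set.inter_subset_left, hU'ne⟩
  obtain ⟨F', hF'C, hF'disj, hF'dense⟩ := exists_maximal_disjoint_family C havail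
  exact ⟨F', fun p hp => (hF'C hp).1, hF'disj, hF'dense, fun p hp => (hF'C hp).2⟩

/-- Core lemma: a continuous map from a complete metric space to a complete metric space,
with dense range, such that the image of every open set is dense in a neighborhood of each
of its points, has comeager range. -/
private lemma range_mem_residual_of_local [CompleteSpace G] [CompleteSpace X]
    (f : G → X) (hf : Continuous f) (hdense : Dense (Set.range f))
    (hloc : ∀ W : Set G, IsOpen W → ∀ g ∈ W, f g ∈ interior (closure (f '' W))) :
    Set.range f ∈ residual X := by
  classical
  set Good : ℕ → Set (Set X × Set G) → Prop := fun n F =>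
    (∀ p ∈ F, IsOpen p.1 ∧ IsOpen p.2 ∧ p.1 ⊆ closure (f '' p.2) ∧
      (∃ c, p.1 ⊆ ball c ((1/2 : ℝ)^n)) ∧ (∃ c, p.2 ⊆ ball c ((1/2 : ℝ)^n))) ∧
    (F.Pairwise fun p q => Disjoint p.1 q.1) ∧ Dense (⋃ p ∈ F, p.1) with hGooddef
  have hpow : ∀ n : ℕ, (0:ℝ) < (1/2 : ℝ)^n := fun n => by positivity
  -- base family
  have hbase : ∃ F, Good 0 F := by
    have h0 : ∀ p ∈ ({((Set.univ : Set X), (Set.univ : Set G))} : Set (Set X × Set G)),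
        IsOpen p.1 ∧ IsOpen p.2 ∧ p.1 ⊆ closure (f '' p.2) := by
      rintro p rfl
      refine ⟨isOpen_univ, isOpen_univ, ?_⟩
      rw [Set.image_univ, hdense.closure_eq]
    have hd0 : Dense (⋃ p ∈ ({((Set.univ : Set X), (Set.univ : Set G))} :
        Set (Set X × Set G)), p.1) := by
      simp [dense_univ]
    obtain ⟨F, h1, h2, h3, _⟩ := family_step f hloc (hpow 0) _ h0 hd0
    exact ⟨F, h1, h2, h3⟩
  -- successor step
  have hstep : ∀ n (F : Set (Set X × Set G)), Good n F →
      ∃ F', Good (n+1) F' ∧ ∀ p ∈ F', ∃ q ∈ F, closure p.1 ⊆ q.1 ∧ closure p.2 ⊆ q.2 := by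
    intro n F hGF
    obtain ⟨F', h1, h2, h3, h4⟩ := family_step f hloc (hpow (n+1)) F
      (fun p hp => ⟨(hGF.1 p hp).1, (hGF.1 p hp).2.1, (hGF.1 p hp).2.2.1⟩) hGF.2.2
    exact ⟨F', ⟨h1, h2, h3⟩, h4⟩
  -- build the sequence of families
  obtain ⟨S, hSgood, hSlink⟩ : ∃ S : ℕ → Set (Set X × Set G), (∀ n, Good n (S n)) ∧
      ∀ n, ∀ p ∈ S (n+1), ∃ q ∈ S n, closure p.1 ⊆ q.1 ∧ closure p.2 ⊆ q.2 := by
    choose F₀ hF₀ using hbase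
    choose nxt hnxt1 hnxt2 using hstep
    let T : ∀ _ : ℕ, {F : Set (Set X × Set G) // ∃ n', Good n' F} := fun n =>
      Nat.rec ⟨F₀, 0, hF₀⟩ (fun n p => ⟨p.1, p.2⟩) n
    -- simpler: build directly with a subtype indexed by n
    let T' : ∀ n : ℕ, {F : Set (Set X × Set G) // Good n F} := fun n =>
      Nat.rec ⟨F₀, hF₀⟩ (fun n p => ⟨nxt n p.1 p.2, hnxt1 n p.1 p.2⟩) n
    refine ⟨fun n => (T' n).1, fun n => (T' n).2, fun n => ?_⟩
    exact hnxt2 n (T' n).1 (T' n).2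
  set E : ℕ → Set X := fun n => ⋃ p ∈ S n, p.1 with hEdef
  have hEres : ∀ n, E n ∈ residual X := fun n =>
    residual_of_dense_open (isOpen_biUnion fun p hp => ((hSgood n).1 p hp).1) (hSgood n).2.2
  refine mem_of_superset ((countable_iInter_mem).2 hEres) ?_
  intro y hy
  have hy' : ∀ n, ∃ p, p ∈ S n ∧ y ∈ p.1 := by
    intro n
    have := Set.mem_iInter.1 hy n
    obtain ⟨p, hp, hyp⟩ := Set.mem_iUnion₂.1 this
    exact ⟨p, hp, hyp⟩
  choose p hpS hpy using hy'
  have hchain : ∀ n, closure (p (n+1)).1 ⊆ (p n).1 ∧ closure (p (n+1)).2 ⊆ (p n).2 := by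
    intro n
    obtain ⟨q, hqS, hq1, hq2⟩ := hSlink n (p (n+1)) (hpS (n+1))
    have hqp : q = p n := by
      by_contra hne
      exact Set.disjoint_left.1 ((hSgood n).2.1 hqS (hpS n) hne)
        (hq1 (subset_closure (hpy (n+1)))) (hpy n)
    rw [← hqp]; exact ⟨hq1, hq2⟩
  have hmono : ∀ n m, n ≤ m → (p m).2 ⊆ (p n).2 := by
    intro n m h
    induction m, h using Nat.le_induction with
    | base => exact subset_rfl
    | succ m _ ih => exact (subset_closure.trans (hchain m).2).trans ih
  have hv : ∀ n, ∃ v, v ∈ (p n).2 ∧ dist (f v) y < (1/2 : ℝ)^n := by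
    intro n
    have hcl : y ∈ closure (f '' (p n).2) := ((hSgood n).1 _ (hpS n)).2.2.1 (hpy n)
    obtain ⟨z, hz, hdz⟩ := Metric.mem_closure_iff.1 hcl _ (hpow n)
    obtain ⟨v, hvmem, rfl⟩ := hz
    exact ⟨v, hvmem, by rwa [dist_comm]⟩
  choose v hv1 hv2 using hv
  have hcauchy : CauchySeq v := by
    refine cauchySeq_of_le_tendsto_0 (fun n => 2 * (1/2 : ℝ)^n) ?_ ?_
    · intro n m N hn hm
      obtain ⟨c, hc⟩ := ((hSgood N).1 _ (hpS N)).2.2.2.2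
      have h1 : v n ∈ ball c ((1/2 : ℝ)^N) := hc (hmono N n hn (hv1 n))
      have h2 : v m ∈ ball c ((1/2 : ℝ)^N) := hc (hmono N m hm (hv1 m))
      rw [mem_ball] at h1 h2
      calc dist (v n) (v m) ≤ dist (v n) c + dist (v m) c := dist_triangle_right _ _ _
        _ ≤ 2 * (1/2 : ℝ)^N := by linarith
    · have := tendsto_pow_atTop_nhds_zero_of_lt_one (by norm_num : (0:ℝ) ≤ 1/2)
        (by norm_num : (1/2 : ℝ) < 1)
      simpa using this.const_mul (2 : ℝ)
  obtain ⟨g, hg⟩ := cauchySeq_tendsto_of_complete hcauchy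
  have h1 : Tendsto (fun n => f (v n)) atTop (𝓝 (f g)) := (hf.tendsto g).comp hg
  have h2 : Tendsto (fun n => f (v n)) atTop (𝓝 y) := by
    rw [tendsto_iff_dist_tendsto_zero]
    refine squeeze_zero (fun n => dist_nonneg) (fun n => (hv2 n).le) ?_
    exact tendsto_pow_atTop_nhds_zero_of_lt_one (by norm_num) (by norm_num)
  exact ⟨g, tendsto_nhds_unique h1 h2⟩

end Aux

/-- Let `G` be a Polish group and `X` a Polish `G`-space.  Some `G`-orbit is comeager in `X`
if and only if there is a dense set `D ⊆ X` contained in a single `G`-orbit such that for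
every open neighborhood `V` of `1` in `G` and every `x ∈ D`, the set `V • x = {g • x : g ∈ V}`
is dense in some open neighborhood of `x`. -/
theorem comeager_orbit_iff_dense_local_orbits {G X : Type*} [Group G] [TopologicalSpace G]
    [IsTopologicalGroup G] [PolishSpace G] [TopologicalSpace X] [PolishSpace X] [MulAction G X]
    [ContinuousSMul G X] :
    (∃ x : X, MulAction.orbit G x ∈ residual X) ↔
      ∃ D : Set X, Dense D ∧ (∃ x₀ : X, D ⊆ MulAction.orbit G x₀) ∧
        ∀ V : Set G, IsOpen V → (1 : G) ∈ V → ∀ x ∈ D,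
          ∃ U : Set X, IsOpen U ∧ x ∈ U ∧ U ⊆ closure ((fun g : G => g • x) '' V) := by
  classical
  constructor
  · rintro ⟨x, hx⟩
    haveI : Nonempty X := ⟨x⟩
    haveI : BaireSpace X := by
      letI := TopologicalSpace.upgradeIsCompletelyMetrizable X
      infer_instance
    refine ⟨MulAction.orbit G x, dense_of_mem_residual hx, ⟨x, subset_rfl⟩, ?_⟩
    intro V hVo hV1 y hy
    have hyres : MulAction.orbit G y ∈ residual X := by
      rwa [MulAction.orbit_eq_iff.2 hy]
    -- find a symmetric open neighborhood W of 1 with W⁻¹ * W ⊆ V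
    obtain ⟨W₀, hW₀o, hW₀1, hW₀mul⟩ := exists_open_nhds_one_mul_subset (hVo.mem_nhds hV1)
    set W : Set G := W₀ ∩ W₀⁻¹ with hWdef
    have hWo : IsOpen W := hW₀o.inter hW₀o.inv
    have hW1 : (1 : G) ∈ W := ⟨hW₀1, by simpa using hW₀1⟩
    have hWsymm : ∀ w ∈ W, w⁻¹ ∈ W := by
      intro w hw
      exact ⟨hw.2, by simpa using hw.1⟩
    have hWV : ∀ u ∈ W, ∀ w ∈ W, u⁻¹ * w ∈ V := by
      intro u hu w hw
      exact hW₀mul (Set.mul_mem_mul (hWsymm u hu).1 hw.1)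
    obtain ⟨s, hsc, hsd⟩ := TopologicalSpace.exists_countable_dense G
    haveI : Countable ↥s := hsc.to_subtype
    -- the orbit is covered by the translates of W • y by elements of s
    have hcover : MulAction.orbit G y ⊆ ⋃ g : s, (fun w => ((g : G) * w) • y) '' W := by
      rintro z ⟨g₀, rfl⟩
      have hopen : IsOpen ((fun w => g₀ * w) '' W) := (isOpenMap_mul_left g₀) W hWo
      have hne : ((fun w => g₀ * w) '' W).Nonempty := ⟨g₀ * 1, ⟨1, hW1, rfl⟩⟩
      obtain ⟨g, hgs, hgmem⟩ := hsd.exists_mem_open hopen hne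
      obtain ⟨w, hwW, hgw⟩ := hgmem
      refine Set.mem_iUnion.2 ⟨⟨g, hgs⟩, ⟨w⁻¹, hWsymm w hwW, ?_⟩⟩
      have hgw' : g₀ * w = g := hgw
      show (g * w⁻¹) • y = g₀ • y
      rw [← hgw']
      congr 1
      group
    have hnm : ∃ g : s, ¬ IsMeagre ((fun w => ((g : G) * w) • y) '' W) := by
      by_contra hmeag
      push_neg at hmeag
      have hU : IsMeagre (⋃ g : s, (fun w => ((g : G) * w) • y) '' W) := by
        rw [IsMeagre, Set.compl_iUnion]
        exact countable_iInter_mem.mpr fun g => hmeag g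
      have horbmeag : IsMeagre (MulAction.orbit G y) := hU.mono hcover
      have h2 : (MulAction.orbit G y)ᶜ ∈ residual X := horbmeag
      have hempty : (∅ : Set X) ∈ residual X := by
        have h3 := Filter.inter_mem hyres h2
        rwa [Set.inter_compl_self] at h3
      have h4 := dense_of_mem_residual hempty
      rw [dense_iff_closure_eq, closure_empty] at h4
      exact Set.empty_ne_univ h4
    obtain ⟨g, hgnm⟩ := hnm
    set T : Set X := (fun w => w • y) '' W with hTdef
    have hTnm : ¬ IsMeagre T := by
      intro hT
      apply hgnm
      have heq : (fun w => ((g : G) * w) • y) '' W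
          = (fun z => (g : G) • z) '' T := by
        rw [hTdef, Set.image_image]
        simp [mul_smul]
      rw [heq]
      have : (fun z => (g : G) • z) '' T
          = (Homeomorph.smul ((g : G)⁻¹) (α := X)) ⁻¹' T := by
        ext z
        constructor
        · rintro ⟨t, ht, rfl⟩
          simpa [Homeomorph.smul] using ht
        · intro hz
          refine ⟨(g : G)⁻¹ • z, hz, by simp⟩
      rw [this]
      exact hT.preimage_of_isOpenMap (Homeomorph.smul ((g : G)⁻¹)).continuous
        (Homeomorph.smul ((g : G)⁻¹)).isOpenMap
    have hNne : (interior (closure T)).Nonempty := by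
      by_contra hN
      rw [Set.not_nonempty_iff_eq_empty] at hN
      exact hTnm (isMeagre_iff_countable_union_isNowhereDense.2
        ⟨{closure T}, by simpa [IsNowhereDense, closure_closure] using hN,
          Set.countable_singleton _, by simpa using subset_closure⟩)
    obtain ⟨z, hz⟩ := hNne
    obtain ⟨t, htN, htT⟩ := _root_.mem_closure_iff.1 (interior_subset hz) _ isOpen_interior hz
    obtain ⟨h₀, hh₀W, rfl⟩ := htT
    refine ⟨(fun z => h₀⁻¹ • z) '' interior (closure T),
      (isOpenMap_smul h₀⁻¹) _ isOpen_interior, ⟨h₀ • y, htN, by simp⟩, ?_⟩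
    intro u hu
    obtain ⟨u', hu', rfl⟩ := hu
    have h1 : h₀⁻¹ • u' ∈ (fun z => h₀⁻¹ • z) '' closure T :=
      ⟨u', interior_subset hu', rfl⟩
    have h2 : (fun z => h₀⁻¹ • z) '' closure T = closure ((fun z => h₀⁻¹ • z) '' T) :=
      (Homeomorph.smul (h₀⁻¹) (α := X)).image_closure T
    have h3 : (fun z => h₀⁻¹ • z) '' T ⊆ (fun g : G => g • y) '' V := by
      rw [hTdef, Set.image_image]
      rintro u ⟨w, hwW, rfl⟩
      exact ⟨h₀⁻¹ * w, hWV h₀ hh₀W w hwW, by simp [mul_smul]⟩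
    rw [h2] at h1
    exact closure_mono h3 h1
  · rintro ⟨D, hD, ⟨x₀, hDo⟩, hloc⟩
    haveI : Nonempty X := ⟨x₀⟩
    letI := TopologicalSpace.upgradeIsCompletelyMetrizable G
    letI := TopologicalSpace.upgradeIsCompletelyMetrizable X
    obtain ⟨d, hdD⟩ := hD.nonempty
    obtain ⟨k, rfl⟩ := MulAction.mem_orbit_iff.1 (hDo hdD)
    set f : G → X := fun g => g • x₀ with hfdef
    have hfc : Continuous f := continuous_id.smul continuous_const
    have hrange : MulAction.orbit G x₀ = Set.range f := rfl
    have hdense : Dense (Set.range f) := hD.mono (by rw [← hrange]; exact hDo)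
    have hlocB : ∀ W : Set G, IsOpen W → ∀ g ∈ W, f g ∈ interior (closure (f '' W)) := by
      intro W hWo g hgW
      set V : Set G := (fun w => (k * g⁻¹) * w * k⁻¹) '' W with hVdef
      have hVo : IsOpen V :=
        ((isOpenMap_mul_right k⁻¹).comp (isOpenMap_mul_left (k * g⁻¹))) W hWo
      have hV1 : (1 : G) ∈ V := ⟨g, hgW, by group⟩
      obtain ⟨U₀, hU₀o, hdU₀, hU₀sub⟩ := hloc V hVo hV1 (k • x₀) hdD
      have key : (fun z => (g * k⁻¹) • z) '' ((fun v : G => v • (k • x₀)) '' V)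
          = f '' W := by
        rw [hVdef, Set.image_image, Set.image_image]
        apply Set.image_congr
        intro w _
        rw [hfdef]
        simp only [smul_smul]
        congr 1
        group
      apply mem_interior.2
      refine ⟨(fun z => (g * k⁻¹) • z) '' U₀, ?_, (isOpenMap_smul (g * k⁻¹)) _ hU₀o, ?_⟩
      · intro u hu
        obtain ⟨u', hu', rfl⟩ := hu
        have h1 : (g * k⁻¹) • u' ∈ (fun z => (g * k⁻¹) • z) ''
            closure ((fun v : G => v • (k • x₀)) '' V) := ⟨u', hU₀sub hu', rfl⟩
        have himg : (fun z => (g * k⁻¹) • z) '' closure ((fun v : G => v • (k • x₀)) '' V)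
            = closure ((fun z => (g * k⁻¹) • z) '' ((fun v : G => v • (k • x₀)) '' V)) :=
          (Homeomorph.smul ((g * k⁻¹)) (α := X)).image_closure _
        rw [himg, key] at h1
        exact h1
      · refine ⟨k • x₀, hdU₀, ?_⟩
        rw [hfdef]
        simp [smul_smul, mul_assoc]
    have := range_mem_residual_of_local f hfc hdense hlocB
    exact ⟨x₀, by rw [hrange]; exact this⟩
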